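/- For every word X in {D,E,A}* and any factorization with an adjacent pair D·A, the weight generating function of multi-Catalan tableaux satisfies weight(X'·D·A·X'') = αβ·weight(X'·A·X''). -/

import Mathlib

inductive MSym : Type
  | a | b | x
deriving DecidableEq

inductive Letter : Type
  | D | E | A
deriving DecidableEq

/-- The content of the diagonal box of row `i` in a staircase filling of size `n`
(boxes `(i, j)` with `i + j < n`; the diagonal box of row `i` is `(i, n-1-i)`). -/
def diagRow (n : ℕ) (F : Fin n → Fin n → Option MSym) (i : Fin n) : Option MSym :=
  F i ⟨n - 1 - (i : ℕ), by have := i.isLt; omega⟩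

def diagCol (n : ℕ) (F : Fin n → Fin n → Option MSym) (j : Fin n) : Option MSym :=
  F ⟨n - 1 - (j : ℕ), by have := j.isLt; omega⟩ j

/-- A box is forced to be empty if there is a `β` to its right in its row or an `α`
below it in its column. -/
def ForcedEmpty (n : ℕ) (F : Fin n → Fin n → Option MSym) (i j : Fin n) : Prop :=
  (∃ j' : Fin n, j < j' ∧ F i j' = some MSym.b) ∨ (∃ i' : Fin n, i < i' ∧ F i' j = some MSym.a)

/-- A multi-Catalan tableau of size `n`: every box on the diagonal is filled (α, β or x);
a box left of a β in its row or above an α in its column is empty; a non-forced box in a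
D-row and E-column contains α or β; in a D-row and A-column contains β; in an A-row and
E-column contains α; every other box is empty. -/
def IsMCT (n : ℕ) (F : Fin n → Fin n → Option MSym) : Prop :=
  (∀ i j : Fin n, n ≤ (i : ℕ) + (j : ℕ) → F i j = none) ∧
  (∀ i : Fin n, diagRow n F i ≠ none) ∧
  (∀ i j : Fin n, (i : ℕ) + (j : ℕ) < n - 1 →
    (ForcedEmpty n F i j → F i j = none) ∧
    (¬ ForcedEmpty n F i j →
      match diagRow n F i, diagCol n F j with
      | some MSym.a, some MSym.b => F i j = some MSym.a ∨ F i j = some MSym.b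
      | some MSym.a, some MSym.x => F i j = some MSym.b
      | some MSym.x, some MSym.b => F i j = some MSym.a
      | _, _ => F i j = none))

def symToLetter : Option MSym → Letter
  | some MSym.a => Letter.D
  | some MSym.b => Letter.E
  | _ => Letter.A

/-- The type of a tableau: the word in {D, E, A} read off the diagonal from top to bottom. -/
def typeWord (n : ℕ) (F : Fin n → Fin n → Option MSym) : List Letter :=
  List.ofFn fun i : Fin n => symToLetter (diagRow n F i)

def countSym (n : ℕ) (F : Fin n → Fin n → Option MSym) (s : MSym) : ℕ :=
  (Finset.univ.filter fun p : Fin n × Fin n => F p.1 p.2 = some s).card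

/-- The weight of a tableau: the product of all its α's and β's. -/
noncomputable def wt (n : ℕ) (α β : ℝ) (F : Fin n → Fin n → Option MSym) : ℝ :=
  α ^ countSym n F MSym.a * β ^ countSym n F MSym.b

/-- The weight generating function of a word: the sum of the weights over all
multi-Catalan tableaux of that type. -/
noncomputable def wordWeight (α β : ℝ) (X : List Letter) : ℝ :=
  ∑ᶠ T : {F : Fin X.length → Fin X.length → Option MSym //
      IsMCT X.length F ∧ typeWord X.length F = X}, wt X.length α β T.1

instance : Fintype MSym := ⟨{MSym.a, MSym.b, MSym.x}, fun x => by cases x <;> simp⟩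

namespace DAproof

def cell3 (dr dc v : Option MSym) : Prop :=
  match dr, dc with
  | some MSym.a, some MSym.b => v = some MSym.a ∨ v = some MSym.b
  | some MSym.a, some MSym.x => v = some MSym.b
  | some MSym.x, some MSym.b => v = some MSym.a
  | _, _ => v = none

theorem isMCT_iff (n : ℕ) (F : Fin n → Fin n → Option MSym) : IsMCT n F ↔
  ((∀ i j : Fin n, n ≤ (i : ℕ) + (j : ℕ) → F i j = none) ∧
  (∀ i : Fin n, diagRow n F i ≠ none) ∧
  (∀ i j : Fin n, (i : ℕ) + (j : ℕ) < n - 1 →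
    (ForcedEmpty n F i j → F i j = none) ∧
    (¬ ForcedEmpty n F i j → cell3 (diagRow n F i) (diagCol n F j) (F i j)))) := Iff.rfl

variable (m q : ℕ)

def ri (i : Fin (m+1+q)) : Fin (m+2+q) :=
  if h : (i:ℕ) < m then ⟨i, by omega⟩ else ⟨(i:ℕ)+1, by have := i.isLt; omega⟩

def ci (j : Fin (m+1+q)) : Fin (m+2+q) :=
  if h : (j:ℕ) < q+1 then ⟨j, by have := j.isLt; omega⟩ else ⟨(j:ℕ)+1, by have := j.isLt; omega⟩

def rd (I : Fin (m+2+q)) : Fin (m+1+q) :=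
  if h : (I:ℕ) < m then ⟨I, by omega⟩ else ⟨(I:ℕ)-1, by have := I.isLt; omega⟩

def cd (J : Fin (m+2+q)) : Fin (m+1+q) :=
  if h : (J:ℕ) < q+1 then ⟨J, by omega⟩ else ⟨(J:ℕ)-1, by have := J.isLt; omega⟩

theorem ri_val (i : Fin (m+1+q)) : ((ri m q i : Fin (m+2+q)) : ℕ) = if (i:ℕ) < m then (i:ℕ) else (i:ℕ)+1 := by
  unfold ri; split <;> simp

theorem ci_val (j : Fin (m+1+q)) : ((ci m q j : Fin (m+2+q)) : ℕ) = if (j:ℕ) < q+1 then (j:ℕ) else (j:ℕ)+1 := by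
  unfold ci; split <;> simp

theorem rd_val (I : Fin (m+2+q)) : ((rd m q I : Fin (m+1+q)) : ℕ) = if (I:ℕ) < m then (I:ℕ) else (I:ℕ)-1 := by
  unfold rd; split <;> simp

theorem cd_val (J : Fin (m+2+q)) : ((cd m q J : Fin (m+1+q)) : ℕ) = if (J:ℕ) < q+1 then (J:ℕ) else (J:ℕ)-1 := by
  unfold cd; split <;> simp

theorem ri_ne (i : Fin (m+1+q)) : ((ri m q i : Fin (m+2+q)) : ℕ) ≠ m := by
  rw [ri_val]; split <;> omega

theorem ci_ne (j : Fin (m+1+q)) : ((ci m q j : Fin (m+2+q)) : ℕ) ≠ q+1 := by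
  rw [ci_val]; split <;> omega

theorem rd_ri (i : Fin (m+1+q)) : rd m q (ri m q i) = i := by
  apply Fin.ext; rw [rd_val, ri_val]; split_ifs <;> omega

theorem cd_ci (j : Fin (m+1+q)) : cd m q (ci m q j) = j := by
  apply Fin.ext; rw [cd_val, ci_val]; split_ifs <;> omega

theorem ri_rd (I : Fin (m+2+q)) (h : (I:ℕ) ≠ m) : ri m q (rd m q I) = I := by
  apply Fin.ext; rw [ri_val, rd_val]; have := I.isLt; split_ifs <;> omega

theorem ci_cd (J : Fin (m+2+q)) (h : (J:ℕ) ≠ q+1) : ci m q (cd m q J) = J := by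
  apply Fin.ext; rw [ci_val, cd_val]; have := J.isLt; split_ifs <;> omega

theorem ri_lt_iff (i i' : Fin (m+1+q)) : ri m q i < ri m q i' ↔ i < i' := by
  rw [Fin.lt_def, Fin.lt_def, ri_val, ri_val]; split_ifs <;> omega

theorem ci_lt_iff (j j' : Fin (m+1+q)) : ci m q j < ci m q j' ↔ j < j' := by
  rw [Fin.lt_def, Fin.lt_def, ci_val, ci_val]; split_ifs <;> omega

def ins (F : Fin (m+1+q) → Fin (m+1+q) → Option MSym) (I J : Fin (m+2+q)) : Option MSym :=
  if (I:ℕ) = m then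
    (if (J:ℕ) = q then some MSym.b else if (J:ℕ) = q+1 then some MSym.a else none)
  else if (J:ℕ) = q+1 then none
  else F (rd m q I) (cd m q J)

def del (G : Fin (m+2+q) → Fin (m+2+q) → Option MSym) (i j : Fin (m+1+q)) : Option MSym :=
  G (ri m q i) (ci m q j)

theorem ins_ri_ci (F : Fin (m+1+q) → Fin (m+1+q) → Option MSym) (i j : Fin (m+1+q)) :
    ins m q F (ri m q i) (ci m q j) = F i j := by
  unfold ins
  rw [if_neg (ri_ne m q i), if_neg (ci_ne m q j), rd_ri, cd_ci]

theorem del_ins (F : Fin (m+1+q) → Fin (m+1+q) → Option MSym) :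
    del m q (ins m q F) = F := by
  funext i j; exact ins_ri_ci m q F i j

theorem diagRow_del (G : Fin (m+2+q) → Fin (m+2+q) → Option MSym) (i : Fin (m+1+q)) :
    diagRow (m+1+q) (del m q G) i = diagRow (m+2+q) G (ri m q i) := by
  unfold diagRow del
  congr 1
  apply Fin.ext
  simp only [ci_val, ri_val]
  have := i.isLt
  split_ifs <;> omega

theorem diagCol_del (G : Fin (m+2+q) → Fin (m+2+q) → Option MSym) (j : Fin (m+1+q)) :
    diagCol (m+1+q) (del m q G) j = diagCol (m+2+q) G (ci m q j) := by
  unfold diagCol del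
  congr 1
  apply Fin.ext
  simp only [ri_val, ci_val]
  have := j.isLt
  split_ifs <;> omega


theorem fe_iff (G : Fin (m+2+q) → Fin (m+2+q) → Option MSym)
    (hrow : ∀ J : Fin (m+2+q), (J:ℕ) ≠ q+1 → G ⟨m, by omega⟩ J ≠ some MSym.a)
    (hcol : ∀ I : Fin (m+2+q), (I:ℕ) ≠ m → G I ⟨q+1, by omega⟩ ≠ some MSym.b)
    (i j : Fin (m+1+q)) :
    ForcedEmpty (m+1+q) (del m q G) i j ↔ ForcedEmpty (m+2+q) G (ri m q i) (ci m q j) := by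
  constructor
  · rintro (⟨j', hj, hb⟩ | ⟨i', hi, ha⟩)
    · exact Or.inl ⟨ci m q j', (ci_lt_iff m q j j').mpr hj, hb⟩
    · exact Or.inr ⟨ri m q i', (ri_lt_iff m q i i').mpr hi, ha⟩
  · rintro (⟨J', hj, hb⟩ | ⟨I', hi, ha⟩)
    · left
      have hne : (J':ℕ) ≠ q+1 := by
        intro h
        apply hcol (ri m q i) (ri_ne m q i)
        rw [← hb]; congr 1; exact (Fin.ext h).symm
      have hJ : ci m q (cd m q J') = J' := ci_cd m q J' hne
      refine ⟨cd m q J', ?_, ?_⟩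
      · rw [← ci_lt_iff m q, hJ]; exact hj
      · show G (ri m q i) (ci m q (cd m q J')) = _
        rw [hJ]; exact hb
    · right
      have hne : (I':ℕ) ≠ m := by
        intro h
        apply hrow (ci m q j) (ci_ne m q j)
        rw [← ha]; congr 1; exact (Fin.ext h).symm
      have hI : ri m q (rd m q I') = I' := ri_rd m q I' hne
      refine ⟨rd m q I', ?_, ?_⟩
      · rw [← ri_lt_iff m q, hI]; exact hi
      · show G (ri m q (rd m q I')) (ci m q j) = _
        rw [hI]; exact ha

theorem structG (G : Fin (m+2+q) → Fin (m+2+q) → Option MSym) (hG : IsMCT (m+2+q) G)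
    (hdm : diagRow (m+2+q) G ⟨m, by omega⟩ = some MSym.a)
    (hdm1 : diagRow (m+2+q) G ⟨m+1, by omega⟩ = some MSym.x) :
    G ⟨m, by omega⟩ ⟨q+1, by omega⟩ = some MSym.a ∧
    G ⟨m+1, by omega⟩ ⟨q, by omega⟩ = some MSym.x ∧
    G ⟨m, by omega⟩ ⟨q, by omega⟩ = some MSym.b ∧
    (∀ J : Fin (m+2+q), (J:ℕ) ≠ q → (J:ℕ) ≠ q+1 → G ⟨m, by omega⟩ J = none) ∧
    (∀ I : Fin (m+2+q), (I:ℕ) ≠ m → G I ⟨q+1, by omega⟩ = none) := by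
  have h1 : G ⟨m, by omega⟩ ⟨q+1, by omega⟩ = some MSym.a := by
    rw [← hdm]; unfold diagRow; congr 1
    exact Fin.ext (show q+1 = m+2+q-1-m by omega)
  have h2 : G ⟨m+1, by omega⟩ ⟨q, by omega⟩ = some MSym.x := by
    rw [← hdm1]; unfold diagRow; congr 1
    exact Fin.ext (show q = m+2+q-1-(m+1) by omega)
  rw [isMCT_iff] at hG
  obtain ⟨c1, c2, c3⟩ := hG
  have hb : G ⟨m, by omega⟩ ⟨q, by omega⟩ = some MSym.b := by
    have hnfe : ¬ ForcedEmpty (m+2+q) G ⟨m, by omega⟩ ⟨q, by omega⟩ := by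
      rintro (⟨J', hj, hbb⟩ | ⟨I', hi, haa⟩)
      · have hJv : q < (J':ℕ) := hj
        rcases eq_or_ne ((J':ℕ)) (q+1) with h|h
        · rw [show J' = ⟨q+1, by omega⟩ from Fin.ext h] at hbb
          rw [h1] at hbb; simp at hbb
        · rw [c1 ⟨m, by omega⟩ J' (by show m+2+q ≤ m + (J':ℕ); omega)] at hbb
          simp at hbb
      · have hIv : m < (I':ℕ) := hi
        rcases eq_or_ne ((I':ℕ)) (m+1) with h|h
        · rw [show I' = ⟨m+1, by omega⟩ from Fin.ext h] at haa
          rw [h2] at haa; simp at haa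
        · rw [c1 I' ⟨q, by omega⟩ (by show m+2+q ≤ (I':ℕ) + q; omega)] at haa
          simp at haa
    have hdc : diagCol (m+2+q) G ⟨q, by omega⟩ = some MSym.x := by
      rw [← h2]; unfold diagCol; congr 1
      exact Fin.ext (show m+2+q-1-q = m+1 by omega)
    have h4 := (c3 ⟨m, by omega⟩ ⟨q, by omega⟩ (by show m + q < m+2+q-1; omega)).2 hnfe
    rw [hdm, hdc] at h4
    exact h4
  refine ⟨h1, h2, hb, ?_, ?_⟩
  · intro J hq hq1
    rcases lt_or_ge ((J:ℕ)) q with h|h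
    · apply (c3 ⟨m, by omega⟩ J (by show m + (J:ℕ) < m+2+q-1; have := J.isLt; omega)).1
      exact Or.inl ⟨⟨q, by omega⟩, h, hb⟩
    · exact c1 ⟨m, by omega⟩ J (by show m+2+q ≤ m + (J:ℕ); omega)
  · intro I hI
    rcases lt_or_ge ((I:ℕ)) m with h|h
    · apply (c3 I ⟨q+1, by omega⟩ (by show (I:ℕ) + (q+1) < m+2+q-1; omega)).1
      exact Or.inr ⟨⟨m, by omega⟩, h, h1⟩
    · exact c1 I ⟨q+1, by omega⟩ (by show m+2+q ≤ (I:ℕ) + (q+1); omega)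

theorem isMCT_del (G : Fin (m+2+q) → Fin (m+2+q) → Option MSym) (hG : IsMCT (m+2+q) G)
    (hdm : diagRow (m+2+q) G ⟨m, by omega⟩ = some MSym.a)
    (hdm1 : diagRow (m+2+q) G ⟨m+1, by omega⟩ = some MSym.x) :
    IsMCT (m+1+q) (del m q G) := by
  obtain ⟨h1, h2, hb, hrow, hcol⟩ := structG m q G hG hdm hdm1
  have hrow' : ∀ J : Fin (m+2+q), (J:ℕ) ≠ q+1 → G ⟨m, by omega⟩ J ≠ some MSym.a := by
    intro J hJ
    rcases eq_or_ne ((J:ℕ)) q with h|h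
    · rw [show J = ⟨q, by omega⟩ from Fin.ext h, hb]; simp
    · rw [hrow J h hJ]; simp
  have hcol' : ∀ I : Fin (m+2+q), (I:ℕ) ≠ m → G I ⟨q+1, by omega⟩ ≠ some MSym.b := by
    intro I hI; rw [hcol I hI]; simp
  rw [isMCT_iff] at hG ⊢
  obtain ⟨c1, c2, c3⟩ := hG
  refine ⟨?_, ?_, ?_⟩
  · intro i j hij
    apply c1
    rw [ri_val, ci_val]; split_ifs <;> omega
  · intro i; rw [diagRow_del]; exact c2 _
  · intro i j hij
    have hlt : ((ri m q i):ℕ) + ((ci m q j):ℕ) < m+2+q-1 := by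
      rw [ri_val, ci_val]; split_ifs <;> omega
    have hfe := fe_iff m q G hrow' hcol' i j
    refine ⟨fun h => (c3 _ _ hlt).1 (hfe.mp h), fun h => ?_⟩
    have h5 := (c3 _ _ hlt).2 (fun hc => h (hfe.mpr hc))
    rw [diagRow_del, diagCol_del]
    exact h5


theorem ins_m_q (F : Fin (m+1+q) → Fin (m+1+q) → Option MSym) :
    ins m q F ⟨m, by omega⟩ ⟨q, by omega⟩ = some MSym.b := by
  unfold ins
  rw [if_pos rfl, if_pos rfl]

theorem ins_m_q1 (F : Fin (m+1+q) → Fin (m+1+q) → Option MSym) :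
    ins m q F ⟨m, by omega⟩ ⟨q+1, by omega⟩ = some MSym.a := by
  unfold ins
  rw [if_pos rfl, if_neg (show q+1 ≠ q by omega), if_pos rfl]

theorem ins_row (F : Fin (m+1+q) → Fin (m+1+q) → Option MSym) (J : Fin (m+2+q))
    (hq : (J:ℕ) ≠ q) (hq1 : (J:ℕ) ≠ q+1) : ins m q F ⟨m, by omega⟩ J = none := by
  unfold ins
  rw [if_pos rfl, if_neg hq, if_neg hq1]

theorem ins_col (F : Fin (m+1+q) → Fin (m+1+q) → Option MSym) (I : Fin (m+2+q))
    (hI : (I:ℕ) ≠ m) : ins m q F I ⟨q+1, by omega⟩ = none := by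
  unfold ins
  rw [if_neg hI, if_pos rfl]

theorem ins_other (F : Fin (m+1+q) → Fin (m+1+q) → Option MSym) (I J : Fin (m+2+q))
    (hI : (I:ℕ) ≠ m) (hJ : (J:ℕ) ≠ q+1) :
    ins m q F I J = F (rd m q I) (cd m q J) := by
  unfold ins
  rw [if_neg hI, if_neg hJ]

theorem ins_m_q_v (F : Fin (m+1+q) → Fin (m+1+q) → Option MSym) (I J : Fin (m+2+q))
    (hI : (I:ℕ) = m) (hJ : (J:ℕ) = q) : ins m q F I J = some MSym.b := by
  unfold ins; rw [if_pos hI, if_pos hJ]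

theorem ins_m_q1_v (F : Fin (m+1+q) → Fin (m+1+q) → Option MSym) (I J : Fin (m+2+q))
    (hI : (I:ℕ) = m) (hJ : (J:ℕ) = q+1) : ins m q F I J = some MSym.a := by
  unfold ins; rw [if_pos hI, if_neg (show ¬ (J:ℕ) = q by omega), if_pos hJ]

theorem ins_row_v (F : Fin (m+1+q) → Fin (m+1+q) → Option MSym) (I J : Fin (m+2+q))
    (hI : (I:ℕ) = m) (hq : (J:ℕ) ≠ q) (hq1 : (J:ℕ) ≠ q+1) : ins m q F I J = none := by
  unfold ins; rw [if_pos hI, if_neg hq, if_neg hq1]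

theorem ins_col_v (F : Fin (m+1+q) → Fin (m+1+q) → Option MSym) (I J : Fin (m+2+q))
    (hI : (I:ℕ) ≠ m) (hJ : (J:ℕ) = q+1) : ins m q F I J = none := by
  unfold ins; rw [if_neg hI, if_pos hJ]

theorem diagRow_ins (F : Fin (m+1+q) → Fin (m+1+q) → Option MSym) (i : Fin (m+1+q)) :
    diagRow (m+2+q) (ins m q F) (ri m q i) = diagRow (m+1+q) F i := by
  have h := diagRow_del m q (ins m q F) i
  rw [del_ins] at h
  exact h.symm

theorem diagCol_ins (F : Fin (m+1+q) → Fin (m+1+q) → Option MSym) (j : Fin (m+1+q)) :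
    diagCol (m+2+q) (ins m q F) (ci m q j) = diagCol (m+1+q) F j := by
  have h := diagCol_del m q (ins m q F) j
  rw [del_ins] at h
  exact h.symm

theorem diagRow_ins_m (F : Fin (m+1+q) → Fin (m+1+q) → Option MSym) :
    diagRow (m+2+q) (ins m q F) ⟨m, by omega⟩ = some MSym.a := by
  unfold diagRow
  rw [show (⟨m+2+q-1-((⟨m, by omega⟩ : Fin (m+2+q)):ℕ), by omega⟩ : Fin (m+2+q)) =
      ⟨q+1, by omega⟩ from Fin.ext (show m+2+q-1-m = q+1 by omega)]
  exact ins_m_q1 m q F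

theorem ins_del (G : Fin (m+2+q) → Fin (m+2+q) → Option MSym) (hG : IsMCT (m+2+q) G)
    (hdm : diagRow (m+2+q) G ⟨m, by omega⟩ = some MSym.a)
    (hdm1 : diagRow (m+2+q) G ⟨m+1, by omega⟩ = some MSym.x) :
    ins m q (del m q G) = G := by
  obtain ⟨h1, h2, hb, hrow, hcol⟩ := structG m q G hG hdm hdm1
  funext I J
  rcases eq_or_ne ((I:ℕ)) m with hI|hI
  · rw [show I = ⟨m, by omega⟩ from Fin.ext hI]
    rcases eq_or_ne ((J:ℕ)) q with hq|hq
    · rw [show J = ⟨q, by omega⟩ from Fin.ext hq, ins_m_q, hb]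
    · rcases eq_or_ne ((J:ℕ)) (q+1) with hq1|hq1
      · rw [show J = ⟨q+1, by omega⟩ from Fin.ext hq1, ins_m_q1, h1]
      · rw [ins_row m q _ J hq hq1, hrow J hq hq1]
  · rcases eq_or_ne ((J:ℕ)) (q+1) with hq1|hq1
    · rw [show J = ⟨q+1, by omega⟩ from Fin.ext hq1, ins_col m q _ I hI, hcol I hI]
    · rw [ins_other m q _ I J hI hq1]
      show G (ri m q (rd m q I)) (ci m q (cd m q J)) = G I J
      rw [ri_rd m q I hI, ci_cd m q J hq1]


theorem val_mk (n a : ℕ) (h : a < n) : ((⟨a, h⟩ : Fin n) : ℕ) = a := rfl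

theorem F_m_q (F : Fin (m+1+q) → Fin (m+1+q) → Option MSym)
    (hx : diagRow (m+1+q) F ⟨m, by omega⟩ = some MSym.x) :
    F ⟨m, by omega⟩ ⟨q, by omega⟩ = some MSym.x := by
  rw [← hx]; unfold diagRow; congr 1
  exact Fin.ext (show q = m+1+q-1-m by omega)

theorem diagCol_ins_q (F : Fin (m+1+q) → Fin (m+1+q) → Option MSym)
    (hx : diagRow (m+1+q) F ⟨m, by omega⟩ = some MSym.x) :
    diagCol (m+2+q) (ins m q F) ⟨q, by omega⟩ = some MSym.x := by
  have e : (⟨q, by omega⟩ : Fin (m+2+q)) = ci m q ⟨q, by omega⟩ := by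
    apply Fin.ext; rw [ci_val]
    show q = if q < q+1 then q else q+1
    simp
  rw [e, diagCol_ins]
  unfold diagCol
  show F ⟨m+1+q-1-q, by omega⟩ ⟨q, by omega⟩ = some MSym.x
  rw [show (⟨m+1+q-1-q, by omega⟩ : Fin (m+1+q)) = ⟨m, by omega⟩ from
    Fin.ext (show m+1+q-1-q = m by omega)]
  exact F_m_q m q F hx

theorem hrow' (F : Fin (m+1+q) → Fin (m+1+q) → Option MSym) :
    ∀ J : Fin (m+2+q), (J:ℕ) ≠ q+1 → ins m q F ⟨m, by omega⟩ J ≠ some MSym.a := by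
  intro J hJ
  rcases eq_or_ne ((J:ℕ)) q with h|h
  · rw [show J = ⟨q, by omega⟩ from Fin.ext h, ins_m_q]; simp
  · rw [ins_row m q F J h hJ]; simp

theorem hcol' (F : Fin (m+1+q) → Fin (m+1+q) → Option MSym) :
    ∀ I : Fin (m+2+q), (I:ℕ) ≠ m → ins m q F I ⟨q+1, by omega⟩ ≠ some MSym.b := by
  intro I hI; rw [ins_col m q F I hI]; simp

theorem fe_ins (F : Fin (m+1+q) → Fin (m+1+q) → Option MSym) (i j : Fin (m+1+q)) :
    ForcedEmpty (m+1+q) F i j ↔ ForcedEmpty (m+2+q) (ins m q F) (ri m q i) (ci m q j) := by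
  have h := fe_iff m q (ins m q F) (hrow' m q F) (hcol' m q F) i j
  rwa [del_ins] at h

theorem isMCT_ins (F : Fin (m+1+q) → Fin (m+1+q) → Option MSym) (hF : IsMCT (m+1+q) F)
    (hx : diagRow (m+1+q) F ⟨m, by omega⟩ = some MSym.x) :
    IsMCT (m+2+q) (ins m q F) := by
  rw [isMCT_iff] at hF ⊢
  obtain ⟨c1, c2, c3⟩ := hF
  refine ⟨?_, ?_, ?_⟩
  · -- condition 1
    intro I J hIJ
    rcases eq_or_ne ((I:ℕ)) m with hI|hI
    · rw [show I = ⟨m, by omega⟩ from Fin.ext hI]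
      exact ins_row m q F J (by omega) (by omega)
    · rcases eq_or_ne ((J:ℕ)) (q+1) with hJ|hJ
      · rw [show J = ⟨q+1, by omega⟩ from Fin.ext hJ]
        exact ins_col m q F I hI
      · rw [ins_other m q F I J hI hJ]
        apply c1
        rw [rd_val, cd_val]
        split_ifs <;> omega
  · -- condition 2
    intro I
    rcases eq_or_ne ((I:ℕ)) m with hI|hI
    · rw [show I = ⟨m, by omega⟩ from Fin.ext hI, diagRow_ins_m]; simp
    · rw [show I = ri m q (rd m q I) from (ri_rd m q I hI).symm, diagRow_ins]
      exact c2 _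
  · -- condition 3
    intro I J hIJ
    rcases eq_or_ne ((I:ℕ)) m with hI|hI
    · rw [show I = ⟨m, by omega⟩ from Fin.ext hI]
      have hJq : (J:ℕ) < q+1 := by omega
      rcases eq_or_ne ((J:ℕ)) q with hq|hq
      · -- the box containing the forced β
        rw [show J = ⟨q, by omega⟩ from Fin.ext hq]
        have hnfe : ¬ ForcedEmpty (m+2+q) (ins m q F) ⟨m, by omega⟩ ⟨q, by omega⟩ := by
          rintro (⟨J', hj, hbb⟩ | ⟨I', hi, haa⟩)
          · have hJv : q < (J':ℕ) := hj
            rcases eq_or_ne ((J':ℕ)) (q+1) with h|h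
            · rw [show J' = ⟨q+1, by omega⟩ from Fin.ext h, ins_m_q1] at hbb
              simp at hbb
            · rw [ins_row m q F J' (by omega) h] at hbb
              simp at hbb
          · have hIv : m < (I':ℕ) := hi
            rw [ins_other m q F I' _ (by omega) (show q ≠ q+1 by omega)] at haa
            have hrd : ((rd m q I'):ℕ) = (I':ℕ)-1 := by rw [rd_val]; split_ifs <;> omega
            have hcd : cd m q ⟨q, by omega⟩ = ⟨q, by omega⟩ := by
              apply Fin.ext; rw [cd_val]
              show (if q < q+1 then q else q - 1) = q
              simp
            rw [hcd] at haa
            rcases eq_or_ne ((I':ℕ)) (m+1) with h|h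
            · rw [show rd m q I' = ⟨m, by omega⟩ from Fin.ext (show ((rd m q I'):ℕ) = m by omega),
                  F_m_q m q F hx] at haa
              simp at haa
            · rw [c1 (rd m q I') ⟨q, by omega⟩ (by show m+1+q ≤ ((rd m q I'):ℕ) + q; omega)] at haa
              simp at haa
        refine ⟨fun h => absurd h hnfe, fun _ => ?_⟩
        rw [diagRow_ins_m, diagCol_ins_q m q F hx, ins_m_q]
        rfl
      · -- row m, left of the β: forced empty
        have hval : ins m q F ⟨m, by omega⟩ J = none := ins_row m q F J hq (by omega)
        refine ⟨fun _ => hval, fun hn => absurd ?_ hn⟩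
        exact Or.inl ⟨⟨q, by omega⟩, (show (J:ℕ) < q by omega), ins_m_q m q F⟩
    · rcases eq_or_ne ((J:ℕ)) (q+1) with hJ|hJ
      · -- new column above the α: forced empty
        rw [show J = ⟨q+1, by omega⟩ from Fin.ext hJ]
        have hIm : (I:ℕ) < m := by omega
        refine ⟨fun _ => ins_col m q F I hI, fun hn => absurd ?_ hn⟩
        exact Or.inr ⟨⟨m, by omega⟩, hIm, ins_m_q1 m q F⟩
      · -- generic box
        rw [show I = ri m q (rd m q I) from (ri_rd m q I hI).symm,
            show J = ci m q (cd m q J) from (ci_cd m q J hJ).symm]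
        set i := rd m q I with hi
        set j := cd m q J with hj
        have hij : (i:ℕ) + (j:ℕ) < m+1+q-1 := by
          rw [hi, hj, rd_val, cd_val]; split_ifs <;> omega
        have fe' := fe_ins m q F i j
        refine ⟨fun h => ?_, fun hn => ?_⟩
        · rw [ins_ri_ci]
          exact (c3 i j hij).1 (fe'.mpr h)
        · have h5 := (c3 i j hij).2 (fun hc => hn (fe'.mp hc))
          rw [diagRow_ins, diagCol_ins, ins_ri_ci]
          exact h5


def emb : Fin (m+1+q) × Fin (m+1+q) ↪ Fin (m+2+q) × Fin (m+2+q) :=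
  ⟨fun p => (ri m q p.1, ci m q p.2), by
    intro p p' h
    have h1 : ri m q p.1 = ri m q p'.1 := congrArg Prod.fst h
    have h2 : ci m q p.2 = ci m q p'.2 := congrArg Prod.snd h
    have e1 : p.1 = p'.1 := by rw [← rd_ri m q p.1, h1, rd_ri]
    have e2 : p.2 = p'.2 := by rw [← cd_ci m q p.2, h2, cd_ci]
    exact Prod.ext e1 e2⟩

theorem count_ins_a (F : Fin (m+1+q) → Fin (m+1+q) → Option MSym) :
    countSym (m+2+q) (ins m q F) MSym.a = countSym (m+1+q) F MSym.a + 1 := by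
  unfold countSym
  have key : (Finset.univ.filter fun p : Fin (m+2+q) × Fin (m+2+q) =>
      ins m q F p.1 p.2 = some MSym.a)
      = insert ((⟨m, by omega⟩ : Fin (m+2+q)), (⟨q+1, by omega⟩ : Fin (m+2+q)))
        ((Finset.univ.filter fun p : Fin (m+1+q) × Fin (m+1+q) =>
          F p.1 p.2 = some MSym.a).map (emb m q)) := by
    ext p
    simp only [Finset.mem_filter, Finset.mem_univ, true_and, Finset.mem_insert,
      Finset.mem_map, Function.Embedding.coeFn_mk, emb]
    constructor
    · intro h
      rcases eq_or_ne ((p.1:ℕ)) m with hI|hI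
      · rcases eq_or_ne ((p.2:ℕ)) (q+1) with hJ|hJ
        · left
          exact Prod.ext (Fin.ext hI) (Fin.ext hJ)
        · exfalso
          rcases eq_or_ne ((p.2:ℕ)) q with hq|hq
          · rw [ins_m_q_v m q F p.1 p.2 hI hq] at h
            simp at h
          · rw [ins_row_v m q F p.1 p.2 hI hq hJ] at h
            simp at h
      · rcases eq_or_ne ((p.2:ℕ)) (q+1) with hJ|hJ
        · exfalso
          rw [ins_col_v m q F p.1 p.2 hI hJ] at h
          simp at h
        · right
          refine ⟨(rd m q p.1, cd m q p.2), ?_, ?_⟩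
          · rw [ins_other m q F p.1 p.2 hI hJ] at h
            exact h
          · exact Prod.ext (ri_rd m q p.1 hI) (ci_cd m q p.2 hJ)
    · intro h
      rcases h with h | ⟨p', hp', hpe⟩
      · rw [h]
        exact ins_m_q1 m q F
      · rw [← hpe]
        show ins m q F (ri m q p'.1) (ci m q p'.2) = _
        rw [ins_ri_ci]
        exact hp'
  rw [key, Finset.card_insert_of_notMem, Finset.card_map]
  simp only [Finset.mem_map, Finset.mem_filter, Finset.mem_univ, true_and,
    Function.Embedding.coeFn_mk, emb, not_exists]
  intro p' h
  have e : ri m q p'.1 = (⟨m, by omega⟩ : Fin (m+2+q)) := congrArg Prod.fst h.2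
  have : ((ri m q p'.1 : Fin (m+2+q)) : ℕ) = m := by rw [e]
  exact ri_ne m q p'.1 this

theorem count_ins_b (F : Fin (m+1+q) → Fin (m+1+q) → Option MSym) :
    countSym (m+2+q) (ins m q F) MSym.b = countSym (m+1+q) F MSym.b + 1 := by
  unfold countSym
  have key : (Finset.univ.filter fun p : Fin (m+2+q) × Fin (m+2+q) =>
      ins m q F p.1 p.2 = some MSym.b)
      = insert ((⟨m, by omega⟩ : Fin (m+2+q)), (⟨q, by omega⟩ : Fin (m+2+q)))
        ((Finset.univ.filter fun p : Fin (m+1+q) × Fin (m+1+q) =>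
          F p.1 p.2 = some MSym.b).map (emb m q)) := by
    ext p
    simp only [Finset.mem_filter, Finset.mem_univ, true_and, Finset.mem_insert,
      Finset.mem_map, Function.Embedding.coeFn_mk, emb]
    constructor
    · intro h
      rcases eq_or_ne ((p.1:ℕ)) m with hI|hI
      · rcases eq_or_ne ((p.2:ℕ)) q with hJ|hJ
        · left
          exact Prod.ext (Fin.ext hI) (Fin.ext hJ)
        · exfalso
          rcases eq_or_ne ((p.2:ℕ)) (q+1) with hq|hq
          · rw [ins_m_q1_v m q F p.1 p.2 hI hq] at h
            simp at h
          · rw [ins_row_v m q F p.1 p.2 hI hJ hq] at h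
            simp at h
      · rcases eq_or_ne ((p.2:ℕ)) (q+1) with hJ|hJ
        · exfalso
          rw [ins_col_v m q F p.1 p.2 hI hJ] at h
          simp at h
        · right
          refine ⟨(rd m q p.1, cd m q p.2), ?_, ?_⟩
          · rw [ins_other m q F p.1 p.2 hI hJ] at h
            exact h
          · exact Prod.ext (ri_rd m q p.1 hI) (ci_cd m q p.2 hJ)
    · intro h
      rcases h with h | ⟨p', hp', hpe⟩
      · rw [h]
        exact ins_m_q m q F
      · rw [← hpe]
        show ins m q F (ri m q p'.1) (ci m q p'.2) = _
        rw [ins_ri_ci]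
        exact hp'
  rw [key, Finset.card_insert_of_notMem, Finset.card_map]
  simp only [Finset.mem_map, Finset.mem_filter, Finset.mem_univ, true_and,
    Function.Embedding.coeFn_mk, emb, not_exists]
  intro p' h
  have e : ri m q p'.1 = (⟨m, by omega⟩ : Fin (m+2+q)) := congrArg Prod.fst h.2
  have : ((ri m q p'.1 : Fin (m+2+q)) : ℕ) = m := by rw [e]
  exact ri_ne m q p'.1 this

theorem wt_ins (α β : ℝ) (F : Fin (m+1+q) → Fin (m+1+q) → Option MSym) :
    wt (m+2+q) α β (ins m q F) = α * β * wt (m+1+q) α β F := by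
  unfold wt
  rw [count_ins_a, count_ins_b, pow_succ, pow_succ]
  ring


theorem sym_D {o : Option MSym} (h : symToLetter o = Letter.D) : o = some MSym.a := by
  match o with
  | none => simp [symToLetter] at h
  | some MSym.a => rfl
  | some MSym.b => simp [symToLetter] at h
  | some MSym.x => simp [symToLetter] at h

theorem sym_A {o : Option MSym} (h : symToLetter o = Letter.A) (h2 : o ≠ none) :
    o = some MSym.x := by
  match o with
  | none => exact absurd rfl h2
  | some MSym.a => simp [symToLetter] at h
  | some MSym.b => simp [symToLetter] at h
  | some MSym.x => rfl

theorem typeWord_getElem? (n : ℕ) (F : Fin n → Fin n → Option MSym) (k : ℕ) (h : k < n) :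
    (typeWord n F)[k]? = some (symToLetter (diagRow n F ⟨k, h⟩)) := by
  unfold typeWord
  rw [List.getElem?_ofFn]
  simp [List.ofFnNthVal, h]

theorem typeWord_none (n : ℕ) (F : Fin n → Fin n → Option MSym) (k : ℕ) (h : n ≤ k) :
    (typeWord n F)[k]? = none := by
  apply List.getElem?_eq_none
  simp [typeWord]
  omega

theorem list_ins_get₁ (L₁ L₂ : List Letter) (k : ℕ) (hk : k < L₁.length) :
    (L₁ ++ [Letter.D] ++ L₂)[k]? = (L₁ ++ L₂)[k]? := by
  rw [List.append_assoc, List.getElem?_append, List.getElem?_append]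
  simp [List.getElem?_append, hk]

theorem list_ins_get₂ (L₁ L₂ : List Letter) (k : ℕ) (hk : L₁.length ≤ k) :
    (L₁ ++ [Letter.D] ++ L₂)[k+1]? = (L₁ ++ L₂)[k]? := by
  rw [List.append_assoc, List.singleton_append, List.getElem?_append, List.getElem?_append,
      if_neg (by omega), if_neg (by omega)]
  rw [show k+1-L₁.length = (k-L₁.length)+1 from by omega]
  exact List.getElem?_cons_succ

theorem list_ins_getm (L₁ L₂ : List Letter) :
    (L₁ ++ [Letter.D] ++ L₂)[L₁.length]? = some Letter.D := by
  rw [List.append_assoc, List.singleton_append, List.getElem?_append, if_neg (by omega)]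
  simp

theorem typeWord_del (G : Fin (m+2+q) → Fin (m+2+q) → Option MSym)
    (L₁ L₂ : List Letter) (h1 : L₁.length = m) (h2 : L₂.length = q+1)
    (hT : typeWord (m+2+q) G = L₁ ++ [Letter.D] ++ L₂) :
    typeWord (m+1+q) (del m q G) = L₁ ++ L₂ := by
  apply List.ext_getElem?
  intro k
  rcases lt_or_ge k (m+1+q) with hk|hk
  · rw [typeWord_getElem? (m+1+q) (del m q G) k hk, diagRow_del]
    have hg2 := typeWord_getElem? (m+2+q) G ((ri m q ⟨k,hk⟩ : Fin (m+2+q)):ℕ) (Fin.isLt _)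
    rw [Fin.eta, hT] at hg2
    rw [← hg2]
    rcases lt_or_ge k m with hkm|hkm
    · rw [show ((ri m q ⟨k,hk⟩ : Fin (m+2+q)):ℕ) = k from by rw [ri_val]; exact if_pos hkm]
      exact list_ins_get₁ L₁ L₂ k (by omega)
    · rw [show ((ri m q ⟨k,hk⟩ : Fin (m+2+q)):ℕ) = k+1 from by
        rw [ri_val]; exact if_neg (show ¬ k < m by omega)]
      exact list_ins_get₂ L₁ L₂ k (by omega)
  · rw [typeWord_none _ _ k hk, List.getElem?_eq_none (by simp; omega)]

theorem typeWord_ins (F : Fin (m+1+q) → Fin (m+1+q) → Option MSym)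
    (L₁ L₂ : List Letter) (h1 : L₁.length = m) (h2 : L₂.length = q+1)
    (hT : typeWord (m+1+q) F = L₁ ++ L₂) :
    typeWord (m+2+q) (ins m q F) = L₁ ++ [Letter.D] ++ L₂ := by
  apply List.ext_getElem?
  intro k
  rcases lt_or_ge k (m+2+q) with hk|hk
  · rw [typeWord_getElem? (m+2+q) (ins m q F) k hk]
    rcases lt_trichotomy k m with hkm|hkm|hkm
    · have e : (⟨k, hk⟩ : Fin (m+2+q)) = ri m q ⟨k, by omega⟩ :=
        Fin.ext (by rw [ri_val]; exact (if_pos hkm).symm)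
      rw [e, diagRow_ins, ← typeWord_getElem? (m+1+q) F k (by omega), hT,
          list_ins_get₁ L₁ L₂ k (by omega)]
    · rw [show (⟨k, hk⟩ : Fin (m+2+q)) = ⟨m, by omega⟩ from Fin.ext hkm, diagRow_ins_m]
      rw [show k = L₁.length from by omega, list_ins_getm]
      rfl
    · have e : (⟨k, hk⟩ : Fin (m+2+q)) = ri m q ⟨k-1, by omega⟩ := by
        apply Fin.ext; rw [ri_val]
        show k = if k-1 < m then k-1 else (k-1)+1
        rw [if_neg (by omega)]; omega
      rw [e, diagRow_ins, ← typeWord_getElem? (m+1+q) F (k-1) (by omega), hT,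
          ← list_ins_get₂ L₁ L₂ (k-1) (by omega)]
      congr 1
      omega
  · rw [typeWord_none _ _ k (by omega), List.getElem?_eq_none (by simp; omega)]

theorem wordWeight_def' (α β : ℝ) (X : List Letter) (n : ℕ) (h : X.length = n) :
    wordWeight α β X = ∑ᶠ T : {F : Fin n → Fin n → Option MSym //
      IsMCT n F ∧ typeWord n F = X}, wt n α β T.1 := by
  subst h; rfl

theorem key (α β : ℝ) (L₁ L₂' : List Letter) :
    wordWeight α β (L₁ ++ [Letter.D] ++ (Letter.A :: L₂')) =
      α * β * wordWeight α β (L₁ ++ (Letter.A :: L₂')) := by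
  rw [wordWeight_def' α β _ (L₁.length + 2 + L₂'.length) (by simp; omega),
      wordWeight_def' α β _ (L₁.length + 1 + L₂'.length) (by simp; omega)]
  have hws : ∀ (F : Fin (L₁.length + 1 + L₂'.length) → Fin (L₁.length + 1 + L₂'.length) → Option MSym),
      IsMCT (L₁.length + 1 + L₂'.length) F →
      typeWord (L₁.length + 1 + L₂'.length) F = L₁ ++ (Letter.A :: L₂') →
      diagRow (L₁.length + 1 + L₂'.length) F ⟨L₁.length, by omega⟩ = some MSym.x := by
    intro F hMCT hTW
    have h5 := typeWord_getElem? (L₁.length + 1 + L₂'.length) F L₁.length (by omega)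
    rw [hTW] at h5
    have h6 : (L₁ ++ (Letter.A :: L₂'))[L₁.length]? = some Letter.A := by
      rw [List.getElem?_append_right (by omega), show L₁.length - L₁.length = 0 from by omega]
      simp
    exact sym_A (Option.some.inj (h5.symm.trans h6)) (hMCT.2.1 _)
  have hdm : ∀ (G : Fin (L₁.length + 2 + L₂'.length) → Fin (L₁.length + 2 + L₂'.length) → Option MSym),
      IsMCT (L₁.length + 2 + L₂'.length) G →
      typeWord (L₁.length + 2 + L₂'.length) G = L₁ ++ [Letter.D] ++ (Letter.A :: L₂') →
      diagRow (L₁.length + 2 + L₂'.length) G ⟨L₁.length, by omega⟩ = some MSym.a := by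
    intro G hMCT hTW
    have h5 := typeWord_getElem? (L₁.length + 2 + L₂'.length) G L₁.length (by omega)
    rw [hTW] at h5
    exact sym_D (Option.some.inj (h5.symm.trans (list_ins_getm L₁ (Letter.A :: L₂'))))
  have hdm1 : ∀ (G : Fin (L₁.length + 2 + L₂'.length) → Fin (L₁.length + 2 + L₂'.length) → Option MSym),
      IsMCT (L₁.length + 2 + L₂'.length) G →
      typeWord (L₁.length + 2 + L₂'.length) G = L₁ ++ [Letter.D] ++ (Letter.A :: L₂') →
      diagRow (L₁.length + 2 + L₂'.length) G ⟨L₁.length + 1, by omega⟩ = some MSym.x := by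
    intro G hMCT hTW
    have h5 := typeWord_getElem? (L₁.length + 2 + L₂'.length) G (L₁.length + 1) (by omega)
    rw [hTW] at h5
    have h6 : (L₁ ++ [Letter.D] ++ (Letter.A :: L₂'))[L₁.length + 1]? = some Letter.A := by
      rw [list_ins_get₂ L₁ (Letter.A :: L₂') L₁.length (by omega),
          List.getElem?_append_right (by omega), show L₁.length - L₁.length = 0 from by omega]
      simp
    exact sym_A (Option.some.inj (h5.symm.trans h6)) (hMCT.2.1 _)
  let e : {F : Fin (L₁.length + 1 + L₂'.length) → Fin (L₁.length + 1 + L₂'.length) → Option MSym //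
        IsMCT (L₁.length + 1 + L₂'.length) F ∧
        typeWord (L₁.length + 1 + L₂'.length) F = L₁ ++ (Letter.A :: L₂')} ≃
      {G : Fin (L₁.length + 2 + L₂'.length) → Fin (L₁.length + 2 + L₂'.length) → Option MSym //
        IsMCT (L₁.length + 2 + L₂'.length) G ∧
        typeWord (L₁.length + 2 + L₂'.length) G = L₁ ++ [Letter.D] ++ (Letter.A :: L₂')} :=
    { toFun := fun T => ⟨ins L₁.length L₂'.length T.1,
        isMCT_ins L₁.length L₂'.length T.1 T.2.1 (hws T.1 T.2.1 T.2.2),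
        typeWord_ins L₁.length L₂'.length T.1 L₁ (Letter.A :: L₂') rfl (by simp) T.2.2⟩,
      invFun := fun T => ⟨del L₁.length L₂'.length T.1,
        isMCT_del L₁.length L₂'.length T.1 T.2.1 (hdm T.1 T.2.1 T.2.2) (hdm1 T.1 T.2.1 T.2.2),
        typeWord_del L₁.length L₂'.length T.1 L₁ (Letter.A :: L₂') rfl (by simp) T.2.2⟩,
      left_inv := fun T => Subtype.ext (del_ins L₁.length L₂'.length T.1),
      right_inv := fun T => Subtype.ext
        (ins_del L₁.length L₂'.length T.1 T.2.1 (hdm T.1 T.2.1 T.2.2) (hdm1 T.1 T.2.1 T.2.2)) }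
  rw [← finsum_comp_equiv e]
  rw [mul_finsum]
  apply finsum_congr
  intro T
  exact wt_ins L₁.length L₂'.length α β T.1

end DAproof

/-- weight(X'·D·A·X'') = αβ·weight(X'·A·X''). -/

theorem wordWeight_DA (α β : ℝ) (X' X'' : List Letter) :
    wordWeight α β (X' ++ [Letter.D, Letter.A] ++ X'') =
      α * β * wordWeight α β (X' ++ [Letter.A] ++ X'') := by
  have h1 : X' ++ [Letter.D, Letter.A] ++ X'' = X' ++ [Letter.D] ++ (Letter.A :: X'') := by simp
  have h2 : X' ++ [Letter.A] ++ X'' = X' ++ (Letter.A :: X'') := by simp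
  rw [h1, h2]
  exact DAproof.key α β X' X''
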